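/- For every k ≥ 1, the normal subgroup L_k is already generated as a normal subgroup by the diagonal elements together with the high-index z's: L_k equals the normal closure in Γ of the set {w_{i,i,k} : i ≥ 1} ∪ {z_{m,n} : m ≥ 2^k, n ≥ 1}. (Equation (3.4) of the paper.) -/

import Mathlib

namespace Paper

variable {G : Type*} [Group G]

/-- The paper's commutator `[a,b] = a⁻¹ b⁻¹ a b`. -/
def pc {G : Type*} [Group G] (a b : G) : G := a⁻¹ * b⁻¹ * a * b

/-- The left-normed iterated commutator `[a, x, (r)…, x]`. -/
def itc {G : Type*} [Group G] (x a : G) : ℕ → G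
  | 0 => a
  | r + 1 => pc (itc x a r) x

/-- `c_i`, where `c_1 = y` and `c_{i+1} = [c_i, x]`; equivalently `c_i = [y, x, (i-1)…, x]`. -/
def cc (x y : G) (i : ℕ) : G := itc x y (i - 1)

/-- `z_{m,n} = [c_m, c_n]`. -/
def zz (x y : G) (m n : ℕ) : G := pc (cc x y m) (cc x y n)

/-- `H = ⟨c_i : i ≥ 1⟩`. -/
def Hsub (x y : G) : Subgroup G :=
  Subgroup.closure {g | ∃ i, 1 ≤ i ∧ g = cc x y i}

/-- `Z = ⟨c_l², z_{m,n} : l, m, n ≥ 1⟩`. -/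
def Zsub (x y : G) : Subgroup G :=
  Subgroup.closure ({g | ∃ l, 1 ≤ l ∧ g = cc x y l ^ 2} ∪
    {g | ∃ m n, 1 ≤ m ∧ 1 ≤ n ∧ g = zz x y m n})

/-- `w_{i,j,k} = ∏_{t=1}^{2^k−1} [z_{i+t,j+t−1}, x, (2^k−1−t)…, x]`,
factors in order of increasing `t` (reindexed by `t ↦ t+1`). -/
def ww (x y : G) (i j k : ℕ) : G :=
  ((List.range (2 ^ k - 1)).map
    (fun t => itc x (zz x y (i + t + 1) (j + t)) (2 ^ k - 2 - t))).prod

/-- `L_k`, the normal closure of `{w_{i,j,k} : i,j ≥ 1} ∪ {z_{m,n} : m ≥ 2^k, n ≥ 1}`. -/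
def Lsub (x y : G) (k : ℕ) : Subgroup G :=
  Subgroup.normalClosure ({g | ∃ i j, 1 ≤ i ∧ 1 ≤ j ∧ g = ww x y i j k} ∪
    {g | ∃ m n, 2 ^ k ≤ m ∧ 1 ≤ n ∧ g = zz x y m n})

/-- `Q_k = ⟨c_l² : l ≥ 2^{k−1}⟩`. -/
def Qsub (x y : G) (k : ℕ) : Subgroup G :=
  Subgroup.closure {g | ∃ l, 2 ^ (k - 1) ≤ l ∧ g = cc x y l ^ 2}

/-- `d_k(h) = [h,x,(2^k−1)…,x]⁻¹ · x^{−2^k} · (xh)^{2^k}`. -/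
def dd (x y : G) (k : ℕ) (h : G) : G :=
  (itc x h (2 ^ k - 1))⁻¹ * (x ^ 2 ^ k)⁻¹ * (x * h) ^ 2 ^ k

/-- `Γ^{2^k} = ⟨g^{2^k} : g ∈ Γ⟩`. -/
def pow2Sub (G : Type*) [Group G] (k : ℕ) : Subgroup G :=
  Subgroup.closure {g | ∃ a : G, g = a ^ 2 ^ k}

/-- `ζ(h₁,h₂) = ∏_{ℓ=0}^{2^k−2} [h₁^x, x, (ℓ)…, x, h₂, x, (2^k−2−ℓ)…, x]`,
factors in order of increasing `ℓ`. -/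
def zeta (x : G) (k : ℕ) (h₁ h₂ : G) : G :=
  ((List.range (2 ^ k - 1)).map
    (fun l => itc x (pc (itc x (x⁻¹ * h₁ * x) l) h₂) (2 ^ k - 2 - l))).prod

section GroupLemmas

variable (x y : G)

lemma pc_mul_left (a b c : G) : pc (a*b) c = b⁻¹ * pc a c * b * pc b c := by
  simp only [pc]; group

lemma pc_mul_right (a c d : G) : pc a (c*d) = pc a d * (d⁻¹ * pc a c * d) := by
  simp only [pc]; group

lemma pc_inv_eq (a b : G) : (pc a b)⁻¹ = pc b a := by
  simp only [pc]; group

lemma pc_self (a : G) : pc a a = 1 := by simp only [pc]; group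

lemma conj_pc (x a b : G) : x⁻¹ * pc a b * x = pc (x⁻¹*a*x) (x⁻¹*b*x) := by
  simp only [pc]; group

lemma conj_eq_of_comm {z b : G} (h : z * b = b * z) : b⁻¹ * z * b = z := by
  rw [mul_assoc, h]; group

lemma cc_mem (i : ℕ) : cc x y (i+1) ∈ Hsub x y :=
  Subgroup.subset_closure ⟨i+1, Nat.le_add_left 1 i, rfl⟩

lemma zz_memZ (m n : ℕ) : zz x y (m+1) (n+1) ∈ Zsub x y :=
  Subgroup.subset_closure (Or.inr ⟨m+1, n+1, Nat.le_add_left 1 m, Nat.le_add_left 1 n, rfl⟩)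

lemma zsub_le_hsub : Zsub x y ≤ Hsub x y := by
  rw [Zsub, Subgroup.closure_le]
  rintro g (⟨l, hl, rfl⟩ | ⟨m, n, hm, hn, rfl⟩)
  · obtain ⟨l', rfl⟩ := Nat.exists_eq_add_of_le' hl
    exact pow_mem (cc_mem x y l') 2
  · obtain ⟨m', rfl⟩ := Nat.exists_eq_add_of_le' hm
    obtain ⟨n', rfl⟩ := Nat.exists_eq_add_of_le' hn
    exact mul_mem (mul_mem (mul_mem (inv_mem (cc_mem x y m'))
      (inv_mem (cc_mem x y n'))) (cc_mem x y m')) (cc_mem x y n')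


variable (x y : G)

lemma cc_succ (i : ℕ) : cc x y (i+2) = pc (cc x y (i+1)) x := by
  show itc x y (i+2-1) = pc (itc x y (i+1-1)) x
  simp only [Nat.add_sub_cancel]
  rfl

lemma conj_cc (i : ℕ) : x⁻¹ * cc x y (i+1) * x = cc x y (i+1) * cc x y (i+2) := by
  rw [cc_succ]; simp only [pc]; group

section WithH

variable (hca : ∀ z ∈ Zsub x y, ∀ h ∈ Hsub x y, z * h = h * z)
variable (hz2 : ∀ z ∈ Zsub x y, z ^ 2 = 1)

include hca

lemma z_comm_h {z h : G} (hz : z ∈ Zsub x y) (hh : h ∈ Hsub x y) : z * h = h * z :=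
  hca z hz h hh

lemma conj_zz (a b : ℕ) :
    x⁻¹ * zz x y (a+1) (b+1) * x =
      zz x y (a+1) (b+2) * zz x y (a+1) (b+1) * (zz x y (a+2) (b+2) * zz x y (a+2) (b+1)) := by
  have hz11 := zz_memZ x y a b
  have hz12 := zz_memZ x y a (b+1)
  have hz21 := zz_memZ x y (a+1) b
  have hz22 := zz_memZ x y (a+1) (b+1)
  have hD := cc_mem x y (b+1)
  have hB := cc_mem x y (a+1)
  have e1 : x⁻¹ * zz x y (a+1) (b+1) * x
      = pc (cc x y (a+1) * cc x y (a+2)) (cc x y (b+1) * cc x y (b+2)) := by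
    rw [zz, conj_pc, conj_cc, conj_cc]
  rw [e1, pc_mul_left, pc_mul_right, pc_mul_right]
  rw [show pc (cc x y (a+1)) (cc x y (b+1)) = zz x y (a+1) (b+1) from rfl,
      show pc (cc x y (a+1)) (cc x y (b+2)) = zz x y (a+1) (b+2) from rfl,
      show pc (cc x y (a+2)) (cc x y (b+1)) = zz x y (a+2) (b+1) from rfl,
      show pc (cc x y (a+2)) (cc x y (b+2)) = zz x y (a+2) (b+2) from rfl]
  rw [conj_eq_of_comm (hca _ hz11 _ hD), conj_eq_of_comm (hca _ hz21 _ hD),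
      conj_eq_of_comm (hca _ (mul_mem hz12 hz11) _ hB)]

end WithH
end GroupLemmas


abbrev Rp : Type := AddMonoidAlgebra (ZMod 2) (ℕ × ℕ)

noncomputable abbrev sM (d : ℕ × ℕ) : Rp := AddMonoidAlgebra.single d 1

noncomputable def Pp : Rp := sM (1,0) + sM (0,1) + sM (1,1)

lemma sM_mul (a b c d : ℕ) : sM (a,b) * sM (c,d) = sM (a+c, b+d) := by
  rw [sM, sM, sM, AddMonoidAlgebra.single_mul_single, one_mul]
  rfl

lemma sM_congr {a b c d : ℕ} (h1 : a = c) (h2 : b = d) : sM (a,b) = sM (c,d) := by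
  rw [h1, h2]

lemma sM_zero_zero : sM (0,0) = 1 := rfl

lemma radd_self (p : Rp) : p + p = 0 := by
  have h : p + p = (1 + 1 : ZMod 2) • p := by rw [add_smul, one_smul]
  rw [h, show (1 + 1 : ZMod 2) = 0 from rfl, zero_smul]

lemma rsq (p q : Rp) : (p + q)^2 = p^2 + q^2 := by
  have h : (p+q)^2 = p^2 + q^2 + (p*q + p*q) := by ring
  rw [h, radd_self, add_zero]

lemma sM_sq (a b : ℕ) : (sM (a,b))^2 = sM (a+a, b+b) := by
  rw [sq, sM_mul]

lemma frobP (j : ℕ) : Pp^(2^j) = sM (2^j, 0) + sM (0, 2^j) + sM (2^j, 2^j) := by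
  induction j with
  | zero => simp only [pow_zero, pow_one]; rfl
  | succ n ih =>
    have h2 : 2^(n+1) = 2^n * 2 := by rw [pow_succ]
    rw [h2, pow_mul, ih, rsq, rsq, sM_sq, sM_sq, sM_sq]
    simp [mul_two]

noncomputable def Sgen (n : ℕ) : Rp :=
  ∑ t ∈ Finset.range (2^n), Pp^(2^n - 1 - t) * sM (t,t)

noncomputable def Egen (n : ℕ) : Rp :=
  ∑ c ∈ Finset.range (2^n), sM (c, 2^n - 1 - c)

lemma S_eq_E (n : ℕ) : Sgen n = Egen n := by
  induction n with
  | zero => simp [Sgen, Egen]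
  | succ n ih =>
    have h2 : (2:ℕ)^(n+1) = 2^n + 2^n := by rw [pow_succ]; omega
    have hS : Sgen (n+1) = (sM (2^n, 0) + sM (0, 2^n)) * Sgen n := by
      rw [Sgen, h2, Finset.sum_range_add]
      have e1 : ∀ t ∈ Finset.range (2^n),
          Pp^(2^n + 2^n - 1 - t) * sM (t,t) = Pp^(2^n) * (Pp^(2^n-1-t) * sM (t,t)) := by
        intro t ht
        rw [← mul_assoc, ← pow_add]
        congr 2
        have := Finset.mem_range.1 ht
        omega
      have e2 : ∀ t ∈ Finset.range (2^n),
          Pp^(2^n + 2^n - 1 - (2^n + t)) * sM (2^n + t, 2^n + t)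
            = sM (2^n, 2^n) * (Pp^(2^n-1-t) * sM (t,t)) := by
        intro t ht
        have h3 : (2:ℕ)^n + 2^n - 1 - (2^n + t) = 2^n - 1 - t := by omega
        rw [h3, mul_comm (sM (2^n, 2^n)), mul_assoc, sM_mul]
        congr 1
        exact sM_congr (by omega) (by omega)
      rw [Finset.sum_congr rfl e1, Finset.sum_congr rfl e2, ← Finset.mul_sum, ← Finset.mul_sum]
      rw [show (∑ t ∈ Finset.range (2^n), Pp^(2^n-1-t) * sM (t,t)) = Sgen n from rfl]
      rw [frobP]
      have h4 : sM (2^n, 2^n) * Sgen n + sM (2^n, 2^n) * Sgen n = 0 := radd_self _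
      linear_combination h4
    have hE : Egen (n+1) = (sM (2^n, 0) + sM (0, 2^n)) * Egen n := by
      rw [Egen, h2, Finset.sum_range_add]
      have e1 : ∀ c ∈ Finset.range (2^n),
          sM (c, 2^n + 2^n - 1 - c) = sM (0, 2^n) * sM (c, 2^n-1-c) := by
        intro c hc
        have := Finset.mem_range.1 hc
        have h3 : (2:ℕ)^n + 2^n - 1 - c = 2^n + (2^n - 1 - c) := by omega
        rw [sM_mul, h3]
        exact sM_congr (by omega) rfl
      have e2 : ∀ c ∈ Finset.range (2^n),
          sM (2^n + c, 2^n + 2^n - 1 - (2^n + c)) = sM (2^n, 0) * sM (c, 2^n-1-c) := by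
        intro c hc
        have := Finset.mem_range.1 hc
        have h3 : (2:ℕ)^n + 2^n - 1 - (2^n + c) = 0 + (2^n - 1 - c) := by omega
        rw [sM_mul, h3]
      rw [Finset.sum_congr rfl e1, Finset.sum_congr rfl e2, ← Finset.mul_sum, ← Finset.mul_sum]
      rw [show (∑ c ∈ Finset.range (2^n), sM (c, 2^n-1-c)) = Egen n from rfl]
      ring
    rw [hS, hE, ih]

noncomputable def Sp (T : ℕ) : Rp := ∑ t ∈ Finset.range T, Pp^(T-1-t) * sM (t,t)

lemma Sgen_eq (k T : ℕ) (hT : T + 1 = 2^k) :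
    Sgen k = ∑ t ∈ Finset.range (T+1), Pp^(T-t) * sM (t,t) := by
  rw [Sgen, ← hT]
  refine Finset.sum_congr rfl fun t ht => ?_
  have h1 : T + 1 - 1 - t = T - t := by omega
  rw [h1]

lemma Pp_mul_Sp (k T : ℕ) (hT : T + 1 = 2^k) : Pp * Sp T = Sgen k + sM (T,T) := by
  have h1 : Sgen k = Pp * Sp T + sM (T,T) := by
    rw [Sgen_eq k T hT, Finset.sum_range_succ, Nat.sub_self, pow_zero, one_mul, Sp,
      Finset.mul_sum]
    congr 1
    refine Finset.sum_congr rfl fun t ht => ?_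
    have h2 : T - t = (T-1-t) + 1 := by
      have := Finset.mem_range.1 ht; omega
    rw [h2, pow_succ', mul_assoc]
  rw [h1]
  linear_combination -radd_self (sM (T,T))

lemma PT_eq (k T : ℕ) (hT : T + 1 = 2^k) : Pp^T = Egen k + sM (1,1) * Sp T := by
  have h1 : Sgen k = sM (1,1) * Sp T + Pp^T := by
    rw [Sgen_eq k T hT, Finset.sum_range_succ', Sp, Finset.mul_sum]
    congr 1
    · refine Finset.sum_congr rfl fun t ht => ?_
      have h2 : T - (t+1) = T-1-t := by omega
      rw [h2, ← mul_assoc, mul_comm (sM (1,1)) (Pp^(T-1-t)), mul_assoc, sM_mul]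
      congr 1
      exact sM_congr (by omega) (by omega)
    · rw [Nat.sub_zero, sM_zero_zero, mul_one]
  rw [← S_eq_E, h1]
  linear_combination -radd_self (sM (1,1) * Sp T)

lemma tele_sum (C : ℕ → Rp) (n : ℕ) :
    ∑ t ∈ Finset.range n, (C t + C (t+1)) = C 0 + C n := by
  induction n with
  | zero => rw [Finset.sum_range_zero]; linear_combination -radd_self (C 0)
  | succ n ih =>
    rw [Finset.sum_range_succ, ih]
    linear_combination radd_self (C n)

lemma tele (T i j : ℕ) :
    sM (i+1,j) * Sp T + sM (i,j+1) * Sp T = Pp^T * sM (i,j) + sM (i+T, j+T) := by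
  have key : sM (i+1,j) * Sp T + sM (i,j+1) * Sp T
      = ∑ t ∈ Finset.range T, ((fun t => Pp^(T-t) * sM (i+t,j+t)) t
          + (fun t => Pp^(T-t) * sM (i+t,j+t)) (t+1)) := by
    rw [Sp, Finset.mul_sum, Finset.mul_sum, ← Finset.sum_add_distrib]
    refine Finset.sum_congr rfl fun t ht => ?_
    have h1 : t < T := Finset.mem_range.1 ht
    have hr1 : T - t = (T-1-t)+1 := by omega
    have hr2 : T - (t+1) = T-1-t := by omega
    have ha : sM (i+1,j) * sM (t,t) = sM (i+1+t, j+t) := by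
      rw [sM_mul]
    have hb : sM (i,j+1) * sM (t,t) = sM (i+t, j+1+t) := by
      rw [sM_mul]
    have hc : Pp * sM (i+t, j+t) = sM (i+1+t, j+t) + sM (i+t, j+1+t) + sM (i+(t+1), j+(t+1)) := by
      rw [Pp, add_mul, add_mul, sM_mul, sM_mul, sM_mul]
      rw [sM_congr (show 1+(i+t) = i+1+t by omega) (show 0+(j+t) = j+t by omega),
          sM_congr (show 0+(i+t) = i+t by omega) (show 1+(j+t) = j+1+t by omega),
          sM_congr (show 1+(i+t) = i+(t+1) by omega) (show 1+(j+t) = j+(t+1) by omega)]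
    simp only []
    rw [hr1, hr2]
    linear_combination Pp^(T-1-t) * ha + Pp^(T-1-t) * hb - Pp^(T-1-t) * hc
      - radd_self (Pp^(T-1-t) * sM (i+(t+1), j+(t+1)))
  rw [key, tele_sum]
  simp only [Nat.sub_self, pow_zero, one_mul, Nat.sub_zero, Nat.add_zero]

lemma step3 (k T : ℕ) (hT : T + 1 = 2^k) (i j : ℕ) :
    Pp^T * sM (i+1,j) + Pp^T * sM (i,j+1) + Pp^T * sM (i+1,j+1)
      = sM (2^k+i, j) + sM (i, 2^k+j) + sM (2^k+i, 2^k+j) := by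
  have h1 : Pp^T * Pp = Pp^(2^k) := by rw [← pow_succ, hT]
  have h2 : Pp^(2^k) * sM (i,j) = sM (2^k+i,j) + sM (i,2^k+j) + sM (2^k+i,2^k+j) := by
    rw [frobP, add_mul, add_mul, sM_mul, sM_mul, sM_mul]
    rw [sM_congr (show (2:ℕ)^k+i = 2^k+i from rfl) (show 0+j = j by omega),
        sM_congr (show (0:ℕ)+i = i by omega) (show (2:ℕ)^k+j = 2^k+j from rfl)]
  have ha : Pp * sM (i,j) = sM (i+1,j) + sM (i,j+1) + sM (i+1,j+1) := by
    rw [Pp, add_mul, add_mul, sM_mul, sM_mul, sM_mul]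
    rw [sM_congr (show 1+i = i+1 by omega) (show 0+j = j by omega),
        sM_congr (show 0+i = i by omega) (show 1+j = j+1 by omega),
        sM_congr (show 1+i = i+1 by omega) (show 1+j = j+1 by omega)]
  have key : Pp^T * (Pp * sM (i,j)) = sM (2^k+i,j) + sM (i,2^k+j) + sM (2^k+i,2^k+j) := by
    rw [← mul_assoc, h1, h2]
  linear_combination key - Pp^T * ha

lemma oddD (k T a : ℕ) (hT : T + 1 = 2^k) :
    Pp^T * sM (a+1,a) = sM (a+1,a) * Egen k + sM (a+2,a+1) * Sp T := by
  have h1 : sM (1,1) * Sp T * sM (a+1,a) = sM (a+2,a+1) * Sp T := by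
    rw [mul_comm (sM (1,1) * Sp T), ← mul_assoc, sM_mul]
  linear_combination (PT_eq k T hT) * sM (a+1,a) + h1

noncomputable def swp : Rp →+* Rp :=
  AddMonoidAlgebra.mapDomainRingHom (ZMod 2) (AddEquiv.prodComm : ℕ × ℕ ≃+ ℕ × ℕ).toAddMonoidHom

lemma swp_eq_mapDomain (p : Rp) :
    swp p = AddMonoidAlgebra.ofCoeff (Finsupp.mapDomain Prod.swap p.coeff) := by
  rfl

lemma swp_single (a b : ℕ) : swp (sM (a,b)) = sM (b,a) := by
  rw [swp_eq_mapDomain, sM, AddMonoidAlgebra.coeff_single, Finsupp.mapDomain_single]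
  rfl

lemma swp_apply (p : Rp) (d : ℕ × ℕ) : (swp p).coeff (d.2, d.1) = p.coeff d := by
  rw [swp_eq_mapDomain, AddMonoidAlgebra.coeff_ofCoeff]
  have h1 : (d.2, d.1) = Prod.swap d := rfl
  rw [h1, Finsupp.mapDomain_apply Prod.swap_injective]

lemma swp_Pp : swp Pp = Pp := by
  rw [Pp, map_add, map_add, swp_single, swp_single, swp_single]
  ring

lemma swp_Sp (T : ℕ) : swp (Sp T) = Sp T := by
  rw [Sp, map_sum]
  refine Finset.sum_congr rfl fun t ht => ?_
  rw [map_mul, map_pow, swp_Pp, swp_single]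

lemma swp_Egen (k : ℕ) : swp (Egen k) = Egen k := by
  rw [Egen, map_sum]
  have h1 : ∀ c ∈ Finset.range (2^k), swp (sM (c, 2^k-1-c)) = sM (2^k-1-c, c) :=
    fun c _ => swp_single c _
  rw [Finset.sum_congr rfl h1]
  rw [← Finset.sum_range_reflect]
  refine Finset.sum_congr rfl fun c hc => ?_
  have := Finset.mem_range.1 hc
  exact sM_congr (by omega) (by omega)


section Phi

variable {G : Type*} [Group G] (x y : G)

def supp (p : Rp) : Finset (ℕ × ℕ) := Finsupp.support p.coeff

noncomputable def zK (d : ℕ × ℕ) : ↥(Zsub x y) := ⟨zz x y (d.1+1) (d.2+1), zz_memZ x y d.1 d.2⟩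

@[reducible]
def instK (hca : ∀ z ∈ Zsub x y, ∀ h ∈ Hsub x y, z * h = h * z) :
    CommGroup ↥(Zsub x y) :=
  { (inferInstance : Group ↥(Zsub x y)) with
    mul_comm := fun a b => Subtype.ext (hca a a.2 b (zsub_le_hsub x y b.2)) }

variable (hca : ∀ z ∈ Zsub x y, ∀ h ∈ Hsub x y, z * h = h * z)
variable (hz2 : ∀ z ∈ Zsub x y, z ^ 2 = 1)

noncomputable def phi (p : Rp) : ↥(Zsub x y) :=
  letI := instK x y hca
  ∏ d ∈ supp p, zK x y d

include hz2 in
lemma zK_mul_self (d : ℕ × ℕ) : zK x y d * zK x y d = 1 := by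
  refine Subtype.ext ?_
  have h := hz2 _ (zz_memZ x y d.1 d.2)
  rw [sq] at h
  exact h

lemma phi_zero : phi x y hca 0 = 1 := by
  letI := instK x y hca
  rw [phi, show supp (0 : Rp) = ∅ from rfl, Finset.prod_empty]

lemma phi_single (a b : ℕ) : phi x y hca (sM (a,b)) = zK x y (a,b) := by
  letI := instK x y hca
  rw [phi]
  have h1 : supp (sM (a,b)) = {(a,b)} :=
    Finsupp.support_single_ne_zero _ one_ne_zero
  rw [h1, Finset.prod_singleton]

lemma supp_add (p q : Rp) : supp (p + q) = symmDiff (supp p) (supp q) := by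
  ext d
  simp only [supp, Finsupp.mem_support_iff, Finset.mem_symmDiff]
  have h1 : (p + q).coeff d = p.coeff d + q.coeff d := rfl
  rw [h1]
  generalize p.coeff d = A
  generalize q.coeff d = B
  revert A B
  decide

include hz2 in
lemma phi_add (p q : Rp) : phi x y hca (p + q) = phi x y hca p * phi x y hca q := by
  letI := instK x y hca
  rw [phi, phi, phi, supp_add]
  have h1 : symmDiff (supp p) (supp q) = (supp p ∪ supp q) \ (supp p ∩ supp q) :=
    symmDiff_eq_sup_sdiff_inf _ _
  rw [h1]
  have h2 : (∏ d ∈ (supp p ∪ supp q) \ (supp p ∩ supp q), zK x y d)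
      * ∏ d ∈ supp p ∩ supp q, zK x y d = ∏ d ∈ supp p ∪ supp q, zK x y d :=
    Finset.prod_sdiff Finset.inter_subset_union
  have h3 : (∏ d ∈ supp p ∪ supp q, zK x y d) * ∏ d ∈ supp p ∩ supp q, zK x y d
      = (∏ d ∈ supp p, zK x y d) * ∏ d ∈ supp q, zK x y d :=
    Finset.prod_union_inter
  have h4 : (∏ d ∈ supp p ∩ supp q, zK x y d) * ∏ d ∈ supp p ∩ supp q, zK x y d = 1 := by
    rw [← Finset.prod_mul_distrib]
    exact Finset.prod_eq_one fun d _ => zK_mul_self x y hz2 d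
  calc (∏ d ∈ (supp p ∪ supp q) \ (supp p ∩ supp q), zK x y d)
      = (∏ d ∈ (supp p ∪ supp q) \ (supp p ∩ supp q), zK x y d) *
        ((∏ d ∈ supp p ∩ supp q, zK x y d) * ∏ d ∈ supp p ∩ supp q, zK x y d) := by
        rw [h4, mul_one]
    _ = ((∏ d ∈ (supp p ∪ supp q) \ (supp p ∩ supp q), zK x y d) *
        (∏ d ∈ supp p ∩ supp q, zK x y d)) * ∏ d ∈ supp p ∩ supp q, zK x y d := by
        rw [mul_assoc]
    _ = (∏ d ∈ supp p, zK x y d) * ∏ d ∈ supp q, zK x y d := by rw [h2, h3]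

include hz2 in
lemma phi_mul_self (p : Rp) : phi x y hca p * phi x y hca p = 1 := by
  rw [← phi_add x y hca hz2, radd_self, phi_zero]

lemma phi_symm (p : Rp) (h : swp p = p) : phi x y hca p = 1 := by
  letI := instK x y hca
  rw [phi]
  have hmem : ∀ d : ℕ × ℕ, d ∈ supp p → Prod.swap d ∈ supp p := by
    intro d hd
    have h2 : (swp p).coeff (d.2, d.1) = p.coeff d := swp_apply p d
    rw [h] at h2
    have h3 : ((d.2, d.1) : ℕ × ℕ) = Prod.swap d := rfl
    rw [h3] at h2
    refine Finsupp.mem_support_iff.2 ?_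
    rw [h2]
    exact Finsupp.mem_support_iff.1 hd
  refine Finset.prod_involution (fun d _ => Prod.swap d) ?_ ?_ (fun d hd => hmem d hd)
    (fun d _ => rfl)
  · intro d _
    refine Subtype.ext ?_
    have h5 : zz x y (d.2+1) (d.1+1) = (zz x y (d.1+1) (d.2+1))⁻¹ := by
      rw [zz, zz, pc_inv_eq]
    show zz x y (d.1+1) (d.2+1) * zz x y (d.2+1) (d.1+1) = 1
    rw [h5, mul_inv_cancel]
  · intro d _ hne hsw
    apply hne
    simp only [Prod.ext_iff] at hsw
    have hdd : d.1 = d.2 := hsw.2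
    refine Subtype.ext ?_
    show zz x y (d.1+1) (d.2+1) = 1
    rw [hdd, zz, pc_self]

lemma swp_swp (p : Rp) : swp (swp p) = p := by
  rw [swp_eq_mapDomain, swp_eq_mapDomain, AddMonoidAlgebra.coeff_ofCoeff, ← Finsupp.mapDomain_comp]
  have h3 : (Prod.swap ∘ Prod.swap : ℕ × ℕ → ℕ × ℕ) = id := by
    funext d; cases d; rfl
  rw [h3, Finsupp.mapDomain_id]

include hz2 in
lemma phi_swp (p : Rp) : phi x y hca (swp p) = phi x y hca p := by
  have h1 : phi x y hca (p + swp p) = 1 := by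
    refine phi_symm x y hca _ ?_
    rw [map_add, swp_swp]
    ring
  have h2 := phi_add x y hca hz2 p (swp p)
  rw [h1] at h2
  have h3 := phi_mul_self x y hca hz2 p
  calc phi x y hca (swp p) = 1 * phi x y hca (swp p) := by rw [one_mul]
    _ = (phi x y hca p * phi x y hca p) * phi x y hca (swp p) := by rw [h3]
    _ = phi x y hca p * (phi x y hca p * phi x y hca (swp p)) := by rw [mul_assoc]
    _ = phi x y hca p := by rw [← h2, mul_one]

noncomputable def Qp : Rp := 1 + Pp

include hca hz2 in
lemma conj_phi_single (a b : ℕ) :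
    x⁻¹ * ↑(phi x y hca (sM (a,b))) * x = ↑(phi x y hca (Qp * sM (a,b))) := by
  have hQs : Qp * sM (a,b) = sM (a, b+1) + sM (a,b) + (sM (a+1, b+1) + sM (a+1, b)) := by
    rw [Qp, Pp, add_mul, add_mul, add_mul, one_mul, sM_mul, sM_mul, sM_mul]
    rw [sM_congr (show 1+a = a+1 by omega) (show 0+b = b by omega),
        sM_congr (show 0+a = a by omega) (show 1+b = b+1 by omega),
        sM_congr (show 1+a = a+1 by omega) (show 1+b = b+1 by omega)]
    ring
  rw [hQs, phi_add x y hca hz2, phi_add x y hca hz2, phi_add x y hca hz2,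
      phi_single, phi_single, phi_single, phi_single]
  push_cast
  exact conj_zz x y hca a b

include hca hz2 in
lemma conj_phi (p : Rp) :
    x⁻¹ * ↑(phi x y hca p) * x = ↑(phi x y hca (Qp * p)) := by
  induction p using AddMonoidAlgebra.induction with
  | zero =>
    rw [mul_zero, phi_zero]
    simp
  | single_add d c f hd hc ih =>
    obtain ⟨a, b⟩ := d
    have hc1 : c = 1 := by revert hc; revert c; decide
    subst hc1
    show x⁻¹ * ↑(phi x y hca (sM (a,b) + (show Rp from f))) * x
        = ↑(phi x y hca (Qp * (sM (a,b) + (show Rp from f))))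
    have key1 : phi x y hca (sM (a,b) + (show Rp from f))
        = phi x y hca (sM (a,b)) * phi x y hca f := phi_add x y hca hz2 _ _
    have key4 : phi x y hca (Qp * sM (a,b) + Qp * (show Rp from f))
        = phi x y hca (Qp * (sM (a,b) + (show Rp from f))) := by
      refine congrArg _ ?_
      ring
    rw [key1, ← key4, phi_add x y hca hz2]
    push_cast
    calc x⁻¹ * (↑(phi x y hca (sM (a,b))) * ↑(phi x y hca f)) * x
        = (x⁻¹ * ↑(phi x y hca (sM (a,b))) * x) * (x⁻¹ * ↑(phi x y hca f) * x) := by group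
      _ = ↑(phi x y hca (Qp * sM (a,b))) * ↑(phi x y hca (Qp * (show Rp from f))) := by
          rw [conj_phi_single x y hca hz2 a b, ih]



include hca hz2 in
lemma phi_inv (p : Rp) : (↑(phi x y hca p) : G)⁻¹ = ↑(phi x y hca p) := by
  have h := phi_mul_self x y hca hz2 p
  have h2 : (↑(phi x y hca p) : G) * ↑(phi x y hca p) = 1 := by
    rw [← Subgroup.coe_mul, h]; rfl
  exact inv_eq_of_mul_eq_one_right h2

include hca hz2 in
lemma pc_phi (p : Rp) : pc (↑(phi x y hca p) : G) x = ↑(phi x y hca (Pp * p)) := by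
  have h1 : pc (↑(phi x y hca p) : G) x
      = (↑(phi x y hca p))⁻¹ * (x⁻¹ * ↑(phi x y hca p) * x) := by
    rw [pc]; group
  rw [h1, phi_inv x y hca hz2, conj_phi x y hca hz2, ← Subgroup.coe_mul,
      ← phi_add x y hca hz2]
  congr 2
  rw [Qp]
  linear_combination radd_self p

include hca hz2 in
lemma itc_phi (r : ℕ) (p : Rp) :
    itc x (↑(phi x y hca p) : G) r = ↑(phi x y hca (Pp^r * p)) := by
  induction r with
  | zero => rw [itc, pow_zero, one_mul]
  | succ r ih =>
    rw [itc, ih, pc_phi x y hca hz2]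
    congr 2
    rw [pow_succ]
    ring

include hca hz2 in
lemma list_phi (n : ℕ) (F : ℕ → Rp) :
    ((List.range n).map (fun t => (↑(phi x y hca (F t)) : G))).prod
      = ↑(phi x y hca (∑ t ∈ Finset.range n, F t)) := by
  induction n with
  | zero => simp [phi_zero]
  | succ n ih =>
    rw [List.range_succ, List.map_append, List.prod_append, ih, Finset.sum_range_succ,
        phi_add x y hca hz2]
    push_cast
    simp

lemma Wq_sum (T a b : ℕ) :
    sM (a+1,b) * Sp T = ∑ t ∈ Finset.range T, Pp^(T-1-t) * sM (a+1+t, b+t) := by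
  rw [Sp, Finset.mul_sum]
  refine Finset.sum_congr rfl fun t ht => ?_
  rw [mul_comm (sM (a+1,b)), mul_assoc, sM_mul]
  congr 1
  exact sM_congr (by omega) (by omega)

include hca hz2 in
lemma phi_ww (k a b : ℕ) :
    ww x y (a+1) (b+1) k = ↑(phi x y hca (sM (a+1,b) * Sp (2^k - 1))) := by
  rw [ww]
  have h1 : ∀ t ∈ List.range (2^k - 1),
      itc x (zz x y ((a+1)+t+1) ((b+1)+t)) (2^k - 2 - t)
        = (↑(phi x y hca (Pp^((2^k-1)-1-t) * sM (a+1+t, b+t))) : G) := by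
    intro t ht
    have h2 : zz x y ((a+1)+t+1) ((b+1)+t) = ↑(phi x y hca (sM (a+1+t, b+t))) := by
      rw [phi_single, show (b+1)+t = (b+t)+1 from by omega]
      rfl
    rw [h2, itc_phi x y hca hz2, show ((2:ℕ)^k-1)-1-t = 2^k-2-t from by omega]
  rw [List.map_congr_left h1, list_phi x y hca hz2, ← Wq_sum]

section Good

variable (k : ℕ)

def NC (x y : G) (k : ℕ) : Subgroup G :=
  Subgroup.normalClosure ({g | ∃ i, 1 ≤ i ∧ g = ww x y i i k} ∪
    {g | ∃ m n, 2 ^ k ≤ m ∧ 1 ≤ n ∧ g = zz x y m n})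

def good (p : Rp) : Prop := (↑(phi x y hca p) : G) ∈ NC x y k

lemma good_zero : good x y hca k 0 := by
  rw [good, phi_zero]
  exact Subgroup.one_mem _

include hz2 in
lemma good_add {p q : Rp} (hp : good x y hca k p) (hq : good x y hca k q) :
    good x y hca k (p + q) := by
  rw [good, phi_add x y hca hz2]
  push_cast
  exact Subgroup.mul_mem _ hp hq

lemma good_of_phi_one {p : Rp} (h : phi x y hca p = 1) : good x y hca k p := by
  rw [good, h]
  exact Subgroup.one_mem _

lemma good_symm {p : Rp} (h : swp p = p) : good x y hca k p :=
  good_of_phi_one x y hca k (phi_symm x y hca p h)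

include hz2 in
lemma good_swp {p : Rp} (hp : good x y hca k p) : good x y hca k (swp p) := by
  rw [good, phi_swp x y hca hz2]
  exact hp

include hz2 in
lemma good_sum {α : Type*} (s : Finset α) (F : α → Rp) (h : ∀ t ∈ s, good x y hca k (F t)) :
    good x y hca k (∑ t ∈ s, F t) := by
  induction s using Finset.cons_induction with
  | empty => rw [Finset.sum_empty]; exact good_zero x y hca k
  | cons a s ha ih =>
    rw [Finset.sum_cons]
    exact good_add x y hca hz2 k (h a (Finset.mem_cons_self a s))
      (ih fun t ht => h t (Finset.mem_cons_of_mem ht))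

lemma good_high {a b : ℕ} (h : 2^k - 1 ≤ a ∨ 2^k - 1 ≤ b) : good x y hca k (sM (a,b)) := by
  have hpow : 1 ≤ 2^k := Nat.one_le_two_pow
  rw [good, phi_single]
  rcases h with h | h
  · exact Subgroup.subset_normalClosure (Or.inr ⟨a+1, b+1, by omega, by omega, rfl⟩)
  · have hmem : zz x y (b+1) (a+1) ∈ NC x y k :=
      Subgroup.subset_normalClosure (Or.inr ⟨b+1, a+1, by omega, by omega, rfl⟩)
    have heq : (↑(zK x y (a,b)) : G) = (zz x y (b+1) (a+1))⁻¹ := by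
      show zz x y (a+1) (b+1) = (zz x y (b+1) (a+1))⁻¹
      rw [zz, zz, pc_inv_eq]
    rw [heq]
    exact Subgroup.inv_mem _ hmem

include hz2 in
lemma good_gen (a : ℕ) : good x y hca k (sM (a+1,a) * Sp (2^k - 1)) := by
  rw [good, ← phi_ww x y hca hz2 k a a]
  exact Subgroup.subset_normalClosure (Or.inl ⟨a+1, by omega, rfl⟩)

lemma swp_PT_sM (T a b : ℕ) : swp (Pp^T * sM (a,b)) = Pp^T * sM (b,a) := by
  rw [map_mul, map_pow, swp_Pp, swp_single]

lemma swp_sM_Sp (T a b : ℕ) : swp (sM (a,b) * Sp T) = sM (b,a) * Sp T := by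
  rw [map_mul, swp_Sp, swp_single]

lemma Egen_mul (i j : ℕ) :
    sM (i,j) * Egen k = ∑ c ∈ Finset.range (2^k), sM (i+c, j+(2^k-1-c)) := by
  rw [Egen, Finset.mul_sum]
  refine Finset.sum_congr rfl fun c hc => ?_
  rw [sM_mul]

include hz2 in
lemma goodEodd (a : ℕ) : good x y hca k (sM (a+1,a) * Egen k) := by
  have hpow : 1 ≤ 2^k := Nat.one_le_two_pow
  rw [Egen_mul k (a+1) a,
    show Finset.range (2^k) = Finset.range ((2^k-1)+1) from by congr 1; omega,
    Finset.sum_range_succ]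
  refine good_add x y hca hz2 k ?_ (good_high x y hca k (Or.inl (by omega)))
  refine good_symm x y hca k ?_
  rw [map_sum]
  calc ∑ c ∈ Finset.range (2^k-1), swp (sM (a+1+c, a+(2^k-1-c)))
      = ∑ c ∈ Finset.range (2^k-1),
          (fun j => sM (a+1+j, a+(2^k-1-j))) ((2^k-1) - 1 - c) := by
        refine Finset.sum_congr rfl fun c hc => ?_
        have hcT := Finset.mem_range.1 hc
        rw [swp_single]
        exact sM_congr (by omega) (by omega)
    _ = ∑ c ∈ Finset.range (2^k-1), sM (a+1+c, a+(2^k-1-c)) := by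
        exact Finset.sum_range_reflect (fun j => sM (a+1+j, a+(2^k-1-j))) (2^k-1)

include hz2 in
lemma goodD1 : ∀ d : ℕ, ∀ i j : ℕ, i = j + d → good x y hca k (Pp^(2^k-1) * sM (i,j)) := by
  have hpow : 1 ≤ 2^k := Nat.one_le_two_pow
  set T := 2^k - 1 with hTdef
  have hT : T + 1 = 2^k := by omega
  intro d
  induction d using Nat.strong_induction_on with
  | _ d ih =>
    intro i j hij
    match d, ih with
    | 0, _ =>
      have hji : i = j := by omega
      subst hji
      refine good_symm x y hca k ?_
      exact swp_PT_sM T i i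
    | 1, _ =>
      subst hij
      have he : sM (j+1, j) = sM (j+1, j) := rfl
      rw [oddD k T j hT]
      refine good_add x y hca hz2 k (goodEodd x y hca hz2 k j) ?_
      have h4 : sM (j+2, j+1) = sM ((j+1)+1, j+1) := rfl
      rw [h4]
      exact good_gen x y hca hz2 k (j+1)
    | (e+2), ih =>
      subst hij
      have h3 := step3 k T hT (j+e+1) j
      have hA : Pp^T * sM (j+(e+2), j)
          = sM (2^k+(j+e+1), j) + sM (j+e+1, 2^k+j) + sM (2^k+(j+e+1), 2^k+j)
            + Pp^T * sM (j+e+1, j+1) + Pp^T * sM (j+(e+2), j+1) := by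
      -- target gap e+2 expressed via step3
        have h5 : sM (j+(e+2), j) = sM ((j+e+1)+1, j) := sM_congr (by omega) rfl
        have h6 : sM (j+(e+2), j+1) = sM ((j+e+1)+1, j+1) := sM_congr (by omega) rfl
        rw [h5, h6]
        linear_combination h3 - radd_self (Pp^T * sM (j+e+1, j+1))
          - radd_self (Pp^T * sM ((j+e+1)+1, j+1))
      rw [hA]
      refine good_add x y hca hz2 k (good_add x y hca hz2 k (good_add x y hca hz2 k
        (good_add x y hca hz2 k ?_ ?_) ?_) ?_) ?_
      · exact good_high x y hca k (Or.inl (by omega))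
      · exact good_high x y hca k (Or.inr (by omega))
      · exact good_high x y hca k (Or.inl (by omega))
      · exact ih e (by omega) (j+e+1) (j+1) (by omega)
      · exact ih (e+1) (by omega) (j+(e+2)) (j+1) (by omega)

include hz2 in
lemma goodD (i j : ℕ) : good x y hca k (Pp^(2^k-1) * sM (i,j)) := by
  rcases le_or_gt j i with h | h
  · exact goodD1 x y hca hz2 k (i - j) i j (by omega)
  · have h1 := goodD1 x y hca hz2 k (j - i) j i (by omega)
    have h2 := good_swp x y hca hz2 k h1
    rw [swp_PT_sM] at h2
    exact h2

include hz2 in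
lemma goodM1 : ∀ e : ℕ, ∀ a b : ℕ, a = b + e → good x y hca k (sM (a,b) * Sp (2^k-1)) := by
  have hpow : 1 ≤ 2^k := Nat.one_le_two_pow
  set T := 2^k - 1 with hTdef
  have hT : T + 1 = 2^k := by omega
  intro e
  induction e using Nat.strong_induction_on with
  | _ e ih =>
    intro a b hab
    match e, ih with
    | 0, _ =>
      have hba : a = b := by omega
      subst hba
      refine good_symm x y hca k ?_
      exact swp_sM_Sp T a a
    | 1, _ =>
      subst hab
      exact good_gen x y hca hz2 k b
    | (f+2), ih =>
      subst hab
      have h3 := tele T (b+f+1) b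
      have hA : sM (b+(f+2), b) * Sp T
          = sM (b+f+1, b+1) * Sp T + Pp^T * sM (b+f+1, b) + sM ((b+f+1)+T, b+T) := by
        have h5 : sM (b+(f+2), b) = sM ((b+f+1)+1, b) := sM_congr (by omega) rfl
        rw [h5]
        linear_combination h3 - radd_self (sM (b+f+1, b+1) * Sp T)
      rw [hA]
      refine good_add x y hca hz2 k (good_add x y hca hz2 k ?_ ?_) ?_
      · exact ih f (by omega) (b+f+1) (b+1) (by omega)
      · exact goodD x y hca hz2 k (b+f+1) b
      · exact good_high x y hca k (Or.inl (by omega))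

include hz2 in
lemma goodM (a b : ℕ) : good x y hca k (sM (a,b) * Sp (2^k-1)) := by
  rcases le_or_gt b a with h | h
  · exact goodM1 x y hca hz2 k (a - b) a b (by omega)
  · have h1 := goodM1 x y hca hz2 k (b - a) b a (by omega)
    have h2 := good_swp x y hca hz2 k h1
    rw [swp_sM_Sp] at h2
    exact h2

end Good
end Phi

theorem Lk_diagonal_generation (x y : G)
    (hca : ∀ z ∈ Zsub x y, ∀ h ∈ Hsub x y, z * h = h * z)
    (hz2 : ∀ z ∈ Zsub x y, z ^ 2 = 1)
    (k : ℕ) (hk : 1 ≤ k) :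
    Lsub x y k =
      Subgroup.normalClosure ({g | ∃ i, 1 ≤ i ∧ g = ww x y i i k} ∪
        {g | ∃ m n, 2 ^ k ≤ m ∧ 1 ≤ n ∧ g = zz x y m n}) := by
  apply le_antisymm
  · haveI : (Subgroup.normalClosure ({g | ∃ i, 1 ≤ i ∧ g = ww x y i i k} ∪
        {g | ∃ m n, 2 ^ k ≤ m ∧ 1 ≤ n ∧ g = zz x y m n})).Normal :=
      Subgroup.normalClosure_normal
    apply Subgroup.normalClosure_le_normal
    rintro g (⟨i, j, hi, hj, rfl⟩ | hz)
    · obtain ⟨a, rfl⟩ : ∃ a, i = a + 1 := ⟨i-1, by omega⟩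
      obtain ⟨b, rfl⟩ : ∃ b, j = b + 1 := ⟨j-1, by omega⟩
      have h1 := goodM x y hca hz2 k (a+1) b
      rw [good, ← phi_ww x y hca hz2 k a b] at h1
      exact h1
    · exact Subgroup.subset_normalClosure (Or.inr hz)
  · apply Subgroup.normalClosure_mono
    rintro g (⟨i, hi, rfl⟩ | hz)
    · exact Or.inl ⟨i, i, hi, hi, rfl⟩
    · exact Or.inr hz

end Paper
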